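/- Let S and T be strongly positive words in 𝓕 such that the word S⁻¹T is reduced (i.e., |S⁻¹T| = |S| + |T|). Then S⁻¹T is either strongly positive or strongly negative. -/

import Mathlib

open Monoid

variable {I : Type*} {G : I → Type*} [∀ i, Group (G i)]

/-- The element of the free product represented by a list of letters. -/
def listProd (l : List (Σ i, G i)) : CoprodI G :=
  (l.map fun p => CoprodI.of p.2).prod

/-- The formal inverse of a list of letters. -/
def invList (l : List (Σ i, G i)) : List (Σ i, G i) :=
  (l.map fun p => (⟨p.1, p.2⁻¹⟩ : Σ i, G i)).reverse

/-- A list of letters (of a reduced word) is *strongly positive* if every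
nonempty suffix, viewed as an element of the free product, is `≻ 1`. -/
def StronglyPositiveList [LinearOrder (CoprodI G)] (l : List (Σ i, G i)) : Prop :=
  ∀ j < l.length, 1 < listProd (l.drop j)

/- ### Auxiliary lemmas -/

theorem listProd_nil : listProd ([] : List (Σ i, G i)) = 1 := rfl

theorem listProd_cons (p : Σ i, G i) (l : List (Σ i, G i)) :
    listProd (p :: l) = CoprodI.of p.2 * listProd l := by
  simp [listProd]

theorem listProd_append (l₁ l₂ : List (Σ i, G i)) :
    listProd (l₁ ++ l₂) = listProd l₁ * listProd l₂ := by
  simp [listProd]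

theorem word_prod_eq_listProd (w : CoprodI.Word G) : w.prod = listProd w.toList := rfl

theorem invList_length (l : List (Σ i, G i)) : (invList l).length = l.length := by
  simp [invList]

theorem listProd_invList (l : List (Σ i, G i)) : listProd (invList l) = (listProd l)⁻¹ := by
  induction l with
  | nil => simp [invList, listProd]
  | cons p l ih =>
    have : invList (p :: l) = invList l ++ [⟨p.1, p.2⁻¹⟩] := by simp [invList]
    rw [this, listProd_append, ih, listProd_cons, listProd_nil, mul_one, listProd_cons,
      mul_inv_rev]
    simp

theorem invList_append (l₁ l₂ : List (Σ i, G i)) :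
    invList (l₁ ++ l₂) = invList l₂ ++ invList l₁ := by
  simp [invList]

theorem invList_invList (l : List (Σ i, G i)) : invList (invList l) = l := by
  have hcomp : ((fun p => (⟨p.1, p.2⁻¹⟩ : Σ i, G i)) ∘ fun p => (⟨p.1, p.2⁻¹⟩ : Σ i, G i)) = id := by
    funext p; cases p; simp
  simp [invList, List.map_reverse, List.map_map, hcomp]

/-- left multiplication is strictly monotone in a group with covariant `≤`. -/
theorem mul_lt_mul_left_grp [LinearOrder (CoprodI G)]
    [CovariantClass (CoprodI G) (CoprodI G) (· * ·) (· ≤ ·)]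
    {a b : CoprodI G} (h : a < b) (c : CoprodI G) : c * a < c * b :=
  lt_of_le_of_ne (mul_le_mul_right h.le c) (fun e => h.ne (mul_left_cancel e))

theorem listProd_take_le [LinearOrder (CoprodI G)]
    [CovariantClass (CoprodI G) (CoprodI G) (· * ·) (· ≤ ·)]
    {l : List (Σ i, G i)} (hl : StronglyPositiveList l) (i : ℕ) :
    listProd (l.take i) ≤ listProd l := by
  conv_rhs => rw [← List.take_append_drop i l]
  rw [listProd_append]
  rcases lt_or_ge i l.length with h | h
  · exact le_mul_of_one_le_right' (hl i h).le
  · rw [List.drop_eq_nil_of_le h, listProd_nil, mul_one]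

/-- The key order-theoretic step: if `A`, `B` are strongly positive lists and
`prod A < prod B` then `A⁻¹B` is strongly positive. -/
theorem sp_inv_append [LinearOrder (CoprodI G)]
    [CovariantClass (CoprodI G) (CoprodI G) (· * ·) (· ≤ ·)]
    {lA lB : List (Σ i, G i)} (hA : StronglyPositiveList lA) (hB : StronglyPositiveList lB)
    (hAB : listProd lA < listProd lB) :
    StronglyPositiveList (invList lA ++ lB) := by
  intro j hj
  rw [List.length_append, invList_length] at hj
  rcases lt_or_ge j lA.length with h | h
  · rw [List.drop_append_of_le_length (by rw [invList_length]; omega), listProd_append]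
    have hdrop : (invList lA).drop j =
        invList (lA.take (lA.length - j)) := by
      simp only [invList, List.drop_reverse, List.length_map]
      rw [← List.map_take]
    rw [hdrop, listProd_invList]
    have hlt : listProd (lA.take (lA.length - j)) < listProd lB :=
      lt_of_le_of_lt (listProd_take_le hA _) hAB
    have := mul_lt_mul_left_grp hlt (listProd (lA.take (lA.length - j)))⁻¹
    rwa [inv_mul_cancel] at this
  · have : j = (invList lA).length + (j - lA.length) := by rw [invList_length]; omega
    rw [this, List.drop_length_add_append]
    exact hB _ (by omega)

/- ### Minimality of the reduced word -/

theorem rcons_length [DecidableEq I] [∀ i, DecidableEq (G i)] {i : I}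
    (p : CoprodI.Word.Pair G i) :
    (CoprodI.Word.rcons p).toList.length ≤ p.tail.toList.length + 1 := by
  rw [CoprodI.Word.rcons]
  split
  · omega
  · simp [CoprodI.Word.cons]

theorem smul_length_aux [DecidableEq I] [∀ i, DecidableEq (G i)] {i : I}
    (m : G i) (w : CoprodI.Word G) (h : w.fstIdx ≠ some i) :
    (CoprodI.of m • w).toList.length ≤ w.toList.length + 1 := by
  rw [CoprodI.Word.of_smul_def, CoprodI.Word.equivPair_eq_of_fstIdx_ne h]
  exact rcons_length _

theorem smul_length [DecidableEq I] [∀ i, DecidableEq (G i)] {i : I}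
    (m : G i) (w : CoprodI.Word G) :
    (CoprodI.of m • w).toList.length ≤ w.toList.length + 1 := by
  induction w using CoprodI.Word.consRecOn with
  | empty =>
    exact smul_length_aux m _ (by simp [CoprodI.Word.fstIdx, CoprodI.Word.empty])
  | cons j g w h1 h2 _ =>
    by_cases hij : i = j
    · subst hij
      conv_lhs => rw [CoprodI.Word.cons_eq_smul, ← mul_smul, ← CoprodI.of.map_mul]
      have hb := smul_length_aux (m * g) w h1
      simp only [CoprodI.Word.cons, List.length_cons] at *
      omega
    · have : (CoprodI.Word.cons g w h1 h2).fstIdx ≠ some i := by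
        simp [CoprodI.Word.fstIdx_cons, Ne.symm hij]
      exact smul_length_aux m _ this

/-- Minimality: a reduced word is no longer than any list of letters representing
the same element. -/
theorem word_length_le [DecidableEq I] [∀ i, DecidableEq (G i)]
    (w : CoprodI.Word G) (l : List (Σ i, G i)) (h : w.prod = listProd l) :
    w.toList.length ≤ l.length := by
  induction l generalizing w with
  | nil =>
    have : w = CoprodI.Word.empty := by
      have h1 : w.prod = CoprodI.Word.empty.prod := by
        rw [h, CoprodI.Word.prod_empty]; rfl
      exact CoprodI.Word.equiv.symm.injective h1
    simp [this, CoprodI.Word.empty]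
  | cons p l ih =>
    set w' : CoprodI.Word G := CoprodI.Word.equiv (listProd l) with hw'
    have hw'prod : w'.prod = listProd l := by
      show CoprodI.Word.equiv.symm (CoprodI.Word.equiv (listProd l)) = listProd l
      simp
    have hle : w'.toList.length ≤ l.length := ih w' hw'prod
    have : w = CoprodI.of p.2 • w' := by
      have h1 : w.prod = (CoprodI.of p.2 • w').prod := by
        rw [h, listProd_cons, CoprodI.Word.prod_smul, hw'prod]
      exact CoprodI.Word.equiv.symm.injective h1
    rw [this]
    have := smul_length p.2 w'
    simpa using le_trans this (by omega)

/- ### Structure of the reduced word of `S⁻¹T` -/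

theorem toList_inv_mul (S T V : CoprodI.Word G)
    (hV : V.prod = S.prod⁻¹ * T.prod)
    (hlen : V.toList.length = S.toList.length + T.toList.length) :
    V.toList = invList S.toList ++ T.toList := by
  classical
  -- the candidate list represents the same element
  have hprod : listProd (invList S.toList ++ T.toList) = S.prod⁻¹ * T.prod := by
    rw [listProd_append, listProd_invList, ← word_prod_eq_listProd, ← word_prod_eq_listProd]
  -- ne_one for the candidate list
  have hne : ∀ p ∈ invList S.toList ++ T.toList, p.2 ≠ 1 := by
    intro p hp
    rcases List.mem_append.mp hp with hp | hp
    · simp only [invList, List.mem_reverse, List.mem_map] at hp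
      obtain ⟨q, hq, rfl⟩ := hp
      exact inv_ne_one.mpr (S.ne_one q hq)
    · exact T.ne_one p hp
  -- chain condition within invList S.toList
  have hchainS : (invList S.toList).Chain' fun a b => a.1 ≠ b.1 := by
    rw [invList]; unfold List.Chain'; rw [List.isChain_reverse, List.isChain_map]
    exact S.chain_ne.imp fun a b h => Ne.symm h
  -- junction condition
  have hjunction : ∀ x ∈ (invList S.toList).getLast?, ∀ y ∈ T.toList.head?, x.1 ≠ y.1 := by
    intro x hx y hy hxy
    -- extract heads
    rcases hS : S.toList with _ | ⟨a, s⟩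
    · rw [hS] at hx; simp [invList] at hx
    rcases hT : T.toList with _ | ⟨b, t⟩
    · rw [hT] at hy; simp at hy
    rw [hS] at hx
    rw [hT] at hy
    simp only [invList, List.getLast?_reverse, List.head?_map, List.head?_cons,
      Option.map_some, Option.mem_def, Option.some.injEq] at hx hy
    subst hx; subst hy
    -- x = ⟨a.1, a.2⁻¹⟩, y = b, and a.1 = b.1
    obtain ⟨i, ga⟩ := a
    obtain ⟨j, gb⟩ := b
    simp only at hxy
    subst hxy
    -- build a shorter list representing the same element
    set l' : List (Σ i, G i) := invList s ++ (⟨i, ga⁻¹ * gb⟩ :: t) with hl'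
    have hl'prod : listProd l' = V.prod := by
      rw [hl', listProd_append, listProd_invList, listProd_cons, hV,
        word_prod_eq_listProd S, word_prod_eq_listProd T, hS, hT,
        listProd_cons, listProd_cons]
      simp only [mul_inv_rev, map_mul, map_inv]
      group
    have hmin := word_length_le V l' hl'prod.symm
    rw [hl'] at hmin
    simp only [List.length_append, invList_length, List.length_cons] at hmin
    rw [hS, hT] at hlen
    simp only [List.length_cons] at hlen
    omega
  -- assemble the word
  have hchain : (invList S.toList ++ T.toList).Chain' fun a b => a.1 ≠ b.1 :=
    List.isChain_append.mpr ⟨hchainS, T.chain_ne, hjunction⟩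
  set W : CoprodI.Word G := ⟨invList S.toList ++ T.toList, hne, hchain⟩ with hW
  have hWprod : W.prod = V.prod := by
    rw [word_prod_eq_listProd W, hW, hprod, hV]
  have : V = W := CoprodI.Word.equiv.symm.injective hWprod.symm
  rw [this]

/-- Suppose `S`, `T` are strongly positive words and the word `S⁻¹T` is reduced
(i.e. `|S⁻¹T| = |S| + |T|`; here `V` is the reduced word of `S⁻¹T`). Then `S⁻¹T`
is either strongly positive or strongly negative. -/
theorem stronglyPositive_or_stronglyNegative_of_inv_mul
    {I : Type*} {G : I → Type*} [∀ i, Group (G i)] [∀ i, Nontrivial (G i)]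
    [LinearOrder (CoprodI G)]
    [CovariantClass (CoprodI G) (CoprodI G) (· * ·) (· ≤ ·)]
    (S T V : CoprodI.Word G)
    (hS : StronglyPositiveList S.toList) (hT : StronglyPositiveList T.toList)
    (hV : V.prod = S.prod⁻¹ * T.prod)
    (hlen : V.toList.length = S.toList.length + T.toList.length) :
    StronglyPositiveList V.toList ∨ StronglyPositiveList (invList V.toList) := by
  classical
  have hstruct := toList_inv_mul S T V hV hlen
  rcases lt_trichotomy S.prod T.prod with h | h | h
  · left
    rw [hstruct]
    exact sp_inv_append hS hT (by rwa [← word_prod_eq_listProd, ← word_prod_eq_listProd])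
  · -- S.prod = T.prod forces V to be the empty word
    left
    have hV1 : V.prod = CoprodI.Word.empty.prod := by
      rw [hV, h, inv_mul_cancel, CoprodI.Word.prod_empty]
    have : V = CoprodI.Word.empty := CoprodI.Word.equiv.symm.injective hV1
    rw [this]
    intro j hj
    simp [CoprodI.Word.empty] at hj
  · right
    rw [hstruct, invList_append, invList_invList]
    exact sp_inv_append hT hS (by rwa [← word_prod_eq_listProd, ← word_prod_eq_listProd])
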